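/- Let G ⊂ G(p,ℝⁿ) be a closed subset of the Grassmannian involving all the variables of ℝⁿ (i.e., there is no hyperplane W with G ⊂ Sym²(W)). Then every A in the relative interior of the convex cone P₊(G) generated by G (interior taken in span(G)) is positive definite. -/

import Mathlib

open Matrix


lemma quad_eq (n : ℕ) (Q : Matrix (Fin n) (Fin n) ℝ) (hs : Q.IsSymm) (hi : Q*Q = Q) (x : Fin n → ℝ) :
    x ⬝ᵥ Q *ᵥ x = (Q *ᵥ x) ⬝ᵥ (Q *ᵥ x) := by
  conv_lhs => rw [← hi]
  rw [← Matrix.mulVec_mulVec, Matrix.dotProduct_mulVec]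
  congr 1
  rw [← Matrix.vecMul_transpose, hs]


/-- Proposition 2.7, one direction: If a closed set `G` of rank-`p`
orthogonal projections involves all the variables of `ℝⁿ` (no hyperplane `W` with
`G ⊂ Sym²(W)`), then every element of the relative interior (interior within the span,
i.e. the intrinsic interior) of the closed convex cone `P₊(G)` generated by `G` is
positive definite. -/
theorem stmt10 (n p : ℕ) (G : Set (Matrix (Fin n) (Fin n) ℝ)) (hGc : IsClosed G)
    (hG : ∀ Q ∈ G, Q.IsSymm ∧ Q * Q = Q ∧ Q.rank = p)
    (hinv : ¬ ∃ W : Submodule ℝ (Fin n → ℝ), Module.finrank ℝ W = n - 1 ∧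
        ∀ Q ∈ G, ∀ x : Fin n → ℝ, (∀ w ∈ W, x ⬝ᵥ w = 0) → Q.mulVec x = 0)
    (S : Set (Matrix (Fin n) (Fin n) ℝ))
    (hS : S = closure {A | ∃ (m : ℕ) (c : Fin m → ℝ) (ξ : Fin m → Matrix (Fin n) (Fin n) ℝ),
        (∀ i, 0 ≤ c i ∧ ξ i ∈ G) ∧ A = ∑ i, c i • ξ i}) :
    ∀ A ∈ intrinsicInterior ℝ S, A.PosDef := by
  intro A hA
  have hAS : A ∈ S := intrinsicInterior_subset hA
  -- every element of S is nonnegative quadratic form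
  have hnonneg : ∀ x : Fin n → ℝ, ∀ M ∈ S, 0 ≤ x ⬝ᵥ M *ᵥ x := by
    intro x M hM
    rw [hS] at hM
    have hcl : IsClosed {M : Matrix (Fin n) (Fin n) ℝ | 0 ≤ x ⬝ᵥ M *ᵥ x} :=
      isClosed_le continuous_const
        (continuous_const.dotProduct (continuous_id.matrix_mulVec continuous_const))
    refine closure_minimal ?_ hcl hM
    rintro M ⟨m, c, ξ, h1, rfl⟩
    simp only [Set.mem_setOf_eq]
    set L : Matrix (Fin n) (Fin n) ℝ →ₗ[ℝ] ℝ :=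
      { toFun := fun M => x ⬝ᵥ M *ᵥ x
        map_add' := fun a b => by
          rw [Matrix.add_mulVec, dotProduct_add]
        map_smul' := fun r a => by
          rw [Matrix.smul_mulVec, dotProduct_smul]; rfl } with hL
    have : x ⬝ᵥ (∑ i, c i • ξ i) *ᵥ x = ∑ i, L (c i • ξ i) := by
      rw [← map_sum]; rfl
    rw [this]
    refine Finset.sum_nonneg fun i _ => ?_
    show 0 ≤ x ⬝ᵥ (c i • ξ i) *ᵥ x
    obtain ⟨hc, hξ⟩ := h1 i
    obtain ⟨hs, hi, -⟩ := hG _ hξ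
    rw [Matrix.smul_mulVec, dotProduct_smul]
    have := quad_eq n (ξ i) hs hi x
    have h0 : 0 ≤ x ⬝ᵥ (ξ i) *ᵥ x := this ▸ Finset.sum_nonneg (fun j _ => mul_self_nonneg _)
    positivity
  -- S consists of symmetric matrices
  have hsymm : ∀ M ∈ S, M.IsSymm := by
    intro M hM
    rw [hS] at hM
    have hcl : IsClosed {M : Matrix (Fin n) (Fin n) ℝ | M.IsSymm} :=
      isClosed_eq (continuous_id.matrix_transpose) continuous_id
    refine closure_minimal ?_ hcl hM
    rintro M ⟨m, c, ξ, h1, rfl⟩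
    simp only [Set.mem_setOf_eq, Matrix.IsSymm, Matrix.transpose_sum, Matrix.transpose_smul]
    exact Finset.sum_congr rfl fun i _ => by rw [(hG _ (h1 i).2).1]
  -- G ⊆ S
  have hGS : G ⊆ S := by
    intro Q hQ
    rw [hS]
    refine subset_closure ⟨1, fun _ => 1, fun _ => Q, fun i => ⟨zero_le_one, hQ⟩, by simp⟩
  -- key pushing lemma
  have hpush : ∀ Q ∈ S, ∃ t : ℝ, 1 < t ∧ t • (A - Q) + Q ∈ S := by
    intro Q hQ
    obtain ⟨a, ha, haA⟩ := hA
    have hQspan : Q ∈ affineSpan ℝ S := subset_affineSpan ℝ S hQ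
    have hAspan : A ∈ affineSpan ℝ S := subset_affineSpan ℝ S hAS
    have hmem : ∀ t : ℝ, t • (A - Q) + Q ∈ affineSpan ℝ S := fun t =>
      (affineSpan ℝ S).smul_vsub_vadd_mem t hAspan hQspan hQspan
    set c : ℝ → (affineSpan ℝ S : Set (Matrix (Fin n) (Fin n) ℝ)) :=
      fun t => ⟨t • (A - Q) + Q, hmem t⟩ with hc
    have hcont : Continuous c := by
      refine Continuous.subtype_mk ?_ _
      exact (continuous_id.smul continuous_const).add continuous_const
    have hc1 : c 1 = a := by
      apply Subtype.ext
      simp [hc, haA.symm]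
    have hopen : IsOpen (c ⁻¹' interior (Subtype.val ⁻¹' S)) :=
      isOpen_interior.preimage hcont
    have h1mem : (1:ℝ) ∈ c ⁻¹' interior (Subtype.val ⁻¹' S) := by
      have : c 1 ∈ interior (Subtype.val ⁻¹' S) := hc1 ▸ ha
      exact this
    obtain ⟨ε, hε, hball⟩ := Metric.isOpen_iff.1 hopen 1 h1mem
    refine ⟨1 + ε/2, by linarith, ?_⟩
    have : (1 + ε/2) ∈ c ⁻¹' interior (Subtype.val ⁻¹' S) := by
      apply hball
      rw [Metric.mem_ball, Real.dist_eq]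
      have h12 : (1 + ε/2) - 1 = ε/2 := by ring
      rw [h12, abs_of_nonneg (by linarith : (0:ℝ) ≤ ε/2)]
      linarith
    have := interior_subset this
    exact this
  -- A is symmetric hence hermitian
  have hAsymm : A.IsSymm := hsymm A hAS
  refine Matrix.PosDef.of_dotProduct_mulVec_pos ?_ ?_
  · rw [Matrix.IsHermitian]
    rw [Matrix.conjTranspose]
    convert hAsymm.eq using 1
    ext i j
    simp
  · intro x hx
    simp only [star_trivial, RCLike.re_to_real]
    rcases (hnonneg x A hAS).lt_or_eq with h | h
    · exact h
    exfalso
    -- x ⬝ A x = 0; show all Q ∈ G kill x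
    have hkill : ∀ Q ∈ G, Q *ᵥ x = 0 := by
      intro Q hQ
      obtain ⟨t, ht, htS⟩ := hpush Q (hGS hQ)
      have h1 := hnonneg x _ htS
      have hexp : x ⬝ᵥ (t • (A - Q) + Q) *ᵥ x
          = t * (x ⬝ᵥ A *ᵥ x) + (1 - t) * (x ⬝ᵥ Q *ᵥ x) := by
        rw [Matrix.add_mulVec, Matrix.smul_mulVec, Matrix.sub_mulVec]
        rw [dotProduct_add, dotProduct_smul, dotProduct_sub]
        simp only [smul_eq_mul]
        ring
      rw [hexp, ← h] at h1
      have hQ0 : 0 ≤ x ⬝ᵥ Q *ᵥ x := hnonneg x Q (hGS hQ)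
      have hQz : x ⬝ᵥ Q *ᵥ x = 0 := by nlinarith
      obtain ⟨hs, hi, -⟩ := hG _ hQ
      rw [quad_eq n Q hs hi x] at hQz
      exact dotProduct_self_eq_zero.1 hQz
    -- build the hyperplane
    apply hinv
    have hxx : x ⬝ᵥ x ≠ 0 := fun h0 => hx (dotProduct_self_eq_zero.1 h0)
    set f : (Fin n → ℝ) →ₗ[ℝ] ℝ :=
      { toFun := fun w => x ⬝ᵥ w
        map_add' := fun a b => dotProduct_add x a b
        map_smul' := fun r a => by simp [dotProduct_smul] } with hf
    have hfx : f x = x ⬝ᵥ x := rfl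
    have hfne : f ≠ 0 := by
      intro h0
      apply hxx
      rw [← hfx, h0]; rfl
    refine ⟨LinearMap.ker f, ?_, ?_⟩
    · have hr : Module.finrank ℝ (LinearMap.range f) = 1 := by
        rw [LinearMap.range_eq_top.2 ?_, finrank_top, Module.finrank_self]
        intro y
        refine ⟨(y / (x ⬝ᵥ x)) • x, ?_⟩
        rw [_root_.map_smul, hfx, smul_eq_mul, div_mul_cancel₀ _ hxx]
      have := LinearMap.finrank_range_add_finrank_ker f
      rw [hr] at this
      have hn : Module.finrank ℝ (Fin n → ℝ) = n := by simp
      omega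
    · intro Q hQ y hy
      -- y is orthogonal to ker f, so y ∈ span x
      set cc : ℝ := (x ⬝ᵥ y) / (x ⬝ᵥ x) with hcc
      have hrker : y - cc • x ∈ LinearMap.ker f := by
        simp only [LinearMap.mem_ker, hf, LinearMap.coe_mk, AddHom.coe_mk,
          dotProduct_sub, dotProduct_smul, hcc]
        rw [smul_eq_mul]
        field_simp
        ring
      have h1 : y ⬝ᵥ (y - cc • x) = 0 := hy _ hrker
      have h2 : x ⬝ᵥ (y - cc • x) = 0 := hrker
      have h3 : (y - cc • x) ⬝ᵥ (y - cc • x) = 0 := by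
        have := sub_dotProduct y (cc • x) (y - cc • x)
        rw [this, h1, smul_dotProduct, h2]
        simp
      have h4 : y = cc • x := by
        have := dotProduct_self_eq_zero.1 h3
        linear_combination (norm := module) this
      rw [h4, Matrix.mulVec_smul, hkill Q hQ, smul_zero]
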